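/- Let G = V^t ⋊ H with V a faithful irreducible H-module, and let K = W₁X and M = W₂H^{v₂}, where W₁ is a proper H-submodule of V^t, W₂ is a maximal H-submodule of V^t, X ≤ H^{v₁} for some v₁ ∈ V^t, and v₂ ∈ V^t. If W₁ + W₂ = V^t, then there exists w₁ ∈ W₁ such that K ∩ M = (W₁ ∩ W₂)·X^{w₁}. -/

import Mathlib

namespace PaperSDP

variable {V H : Type*} [AddCommGroup V] [Group H] [DistribMulAction H V] {t : ℕ}

/-- The diagonal action of `H` on `V^t`, as a homomorphism into the
(multiplicatively written) automorphism group of `V^t`. -/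
def phi (V : Type*) [AddCommGroup V] (H : Type*) [Group H] [DistribMulAction H V]
    (t : ℕ) : H →* MulAut (Multiplicative (Fin t → V)) where
  toFun h := AddEquiv.toMultiplicative (DistribMulAction.toAddAut H (Fin t → V) h)
  map_one' := by ext v; simp
  map_mul' h₁ h₂ := by ext v; simp [mul_smul]

/-- The semidirect product `G = V^t ⋊ H` with diagonal action. -/
abbrev SDP (V : Type*) [AddCommGroup V] (H : Type*) [Group H] [DistribMulAction H V]
    (t : ℕ) : Type _ :=
  (Multiplicative (Fin t → V)) ⋊[phi V H t] H

/-- The copy of `V^t` inside `G`. -/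
def VtG (V : Type*) [AddCommGroup V] (H : Type*) [Group H] [DistribMulAction H V]
    (t : ℕ) : Subgroup (SDP V H t) :=
  (SemidirectProduct.inl : Multiplicative (Fin t → V) →* SDP V H t).range

/-- The image in `G` of an additive subgroup `W` of `V^t`. -/
def subG (W : AddSubgroup (Fin t → V)) : Subgroup (SDP V H t) :=
  (AddSubgroup.toSubgroup W).map
    (SemidirectProduct.inl : Multiplicative (Fin t → V) →* SDP V H t)

/-- The element of `G` corresponding to `v ∈ V^t`. -/
def elemG (v : Fin t → V) : SDP V H t :=
  SemidirectProduct.inl (Multiplicative.ofAdd v)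

/-- The conjugate `K^v = v⁻¹ K v` of a subgroup `K ≤ G` by an element `v ∈ V^t`. -/
def conjG (K : Subgroup (SDP V H t)) (v : Fin t → V) : Subgroup (SDP V H t) :=
  K.map (MulAut.conj (elemG v)⁻¹).toMonoidHom

/-- The copy `H^v` of `H` in `G`, conjugated by `v ∈ V^t`. -/
def HG (V : Type*) [AddCommGroup V] (H : Type*) [Group H] [DistribMulAction H V]
    (t : ℕ) (v : Fin t → V) : Subgroup (SDP V H t) :=
  conjG (SemidirectProduct.inr : H →* SDP V H t).range v

/-- `W` is an `H`-submodule of `V^t` (an `H`-invariant additive subgroup). -/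
def IsHSub (H : Type*) [Group H] [DistribMulAction H V]
    (W : AddSubgroup (Fin t → V)) : Prop :=
  ∀ (h : H) (w : Fin t → V), w ∈ W → h • w ∈ W

/-- `W` is a maximal `H`-submodule of `V^t`. -/
def IsMaxHSub (H : Type*) [Group H] [DistribMulAction H V]
    (W : AddSubgroup (Fin t → V)) : Prop :=
  IsHSub H W ∧ W ≠ ⊤ ∧ ∀ W' : AddSubgroup (Fin t → V), IsHSub H W' → W < W' → W' = ⊤

/-- The action of `H` on `V` is (faithful and) irreducible. -/
def IsIrreducible (H : Type*) [Group H] (V : Type*) [AddCommGroup V]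
    [DistribMulAction H V] : Prop :=
  (⊥ : AddSubgroup V) ≠ ⊤ ∧
    ∀ W : AddSubgroup V, (∀ (h : H) (w : V), w ∈ W → h • w ∈ W) → W = ⊥ ∨ W = ⊤

/-- The action of `H` on `V` is faithful. -/
def IsFaithful (H : Type*) [Group H] (V : Type*) [AddCommGroup V]
    [DistribMulAction H V] : Prop :=
  ∀ h : H, (∀ v : V, h • v = v) → h = 1

/-- An `End_H(V)`-subspace of `V`: an additive subgroup stable under all
`H`-equivariant additive endomorphisms of `V`. -/
def IsFSub (H : Type*) [Group H] (V : Type*) [AddCommGroup V] [DistribMulAction H V]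
    (Z : AddSubgroup V) : Prop :=
  ∀ f : V →+ V, (∀ (h : H) (v : V), f (h • v) = h • f v) → ∀ z ∈ Z, f z ∈ Z

/-- The centralizer `C_{H*}(Z)` of a subset `Z ⊆ V` (embedded diagonally in `V^t`)
in the conjugate `H* = H^g` of `H`, inside `G`. -/
def CHstar (g : SDP V H t) (Z : AddSubgroup V) : Subgroup (SDP V H t) :=
  ((SemidirectProduct.inr : H →* SDP V H t).range.map (MulAut.conj g).toMonoidHom) ⊓
    Subgroup.centralizer ((fun z : V => elemG (H := H) (fun _ : Fin t => z)) '' Z)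

end PaperSDP

open PaperSDP


section Aux

variable {V H : Type*} [AddCommGroup V] [Group H] [DistribMulAction H V] {t : ℕ}

open SemidirectProduct

lemma elemG_mul' (a b : Fin t → V) :
    elemG (H := H) a * elemG b = elemG (a + b) := by
  rw [elemG, elemG, elemG, ofAdd_add, map_mul]

lemma elemG_inv' (a : Fin t → V) : (elemG (H := H) a)⁻¹ = elemG (-a) := by
  rw [elemG, elemG, ofAdd_neg, map_inv]

lemma elemG_injective : Function.Injective (elemG (V := V) (H := H) (t := t)) := by
  intro a b hab
  simpa [elemG] using hab

lemma right_elemG (a : Fin t → V) : (elemG (H := H) a).right = 1 := rfl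

lemma conj_elemG (g : SDP V H t) (d : Fin t → V) :
    g * elemG d * g⁻¹ = elemG (g.right • d) := by
  have h1 : (inr g.right : SDP V H t) * elemG d * (inr g.right)⁻¹
      = elemG (g.right • d) := by
    have h0 := inl_aut (φ := phi V H t) g.right (Multiplicative.ofAdd d)
    rw [map_inv] at h0
    exact h0.symm
  conv_lhs => rw [← inl_left_mul_inr_right g]
  rw [mul_inv_rev]
  calc inl g.left * inr g.right * elemG d * ((inr g.right)⁻¹ * (inl g.left)⁻¹)
      = inl g.left * (inr g.right * elemG d * (inr g.right)⁻¹) * (inl g.left)⁻¹ := by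
        group
    _ = inl g.left * elemG (g.right • d) * (inl g.left)⁻¹ := by rw [h1]
    _ = elemG (g.right • d) := by
        rw [elemG, ← map_mul, ← map_inv, ← map_mul, mul_comm g.left, mul_inv_cancel_right]

lemma elemG_inr_elemG (a : Fin t → V) (h : H) (b : Fin t → V) :
    elemG (H := H) a * inr h * elemG b = elemG (a + h • b) * inr h := by
  have h1 : (inr h : SDP V H t) * elemG b = elemG (h • b) * inr h := by
    have := inl_aut (φ := phi V H t) h (Multiplicative.ofAdd b)
    have h2 : (elemG (h • b) : SDP V H t) = inr h * elemG b * (inr h)⁻¹ := by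
      rw [← map_inv]; exact this
    rw [h2]; group
  rw [mul_assoc, h1, ← mul_assoc, elemG_mul']

lemma mem_subG {W : AddSubgroup (Fin t → V)} {x : SDP V H t} :
    x ∈ subG (H := H) W ↔ ∃ w ∈ W, elemG (H := H) w = x := by
  rw [subG, Subgroup.mem_map]
  constructor
  · rintro ⟨y, hy, rfl⟩; exact ⟨y.toAdd, hy, rfl⟩
  · rintro ⟨w, hw, rfl⟩; exact ⟨Multiplicative.ofAdd w, hw, rfl⟩

lemma mem_conjG {K : Subgroup (SDP V H t)} {v : Fin t → V} {x : SDP V H t} :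
    x ∈ conjG K v ↔ ∃ y ∈ K, (elemG v)⁻¹ * y * elemG v = x := by
  rw [conjG, Subgroup.mem_map]
  simp only [MulEquiv.toMonoidHom_eq_coe, MonoidHom.coe_coe, MulAut.conj_apply, inv_inv]

lemma mem_HG {v : Fin t → V} {x : SDP V H t} :
    x ∈ HG V H t v ↔ ∃ h : H, (elemG v)⁻¹ * inr h * elemG v = x := by
  rw [HG, mem_conjG]
  constructor
  · rintro ⟨y, ⟨h, rfl⟩, rfl⟩; exact ⟨h, rfl⟩
  · rintro ⟨h, rfl⟩; exact ⟨inr h, ⟨h, rfl⟩, rfl⟩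

lemma subG_normal {W : AddSubgroup (Fin t → V)} (hW : IsHSub H W) :
    (subG (H := H) W).Normal := by
  constructor
  intro n hn g
  obtain ⟨w, hw, rfl⟩ := mem_subG.mp hn
  exact mem_subG.mpr ⟨g.right • w, hW _ _ hw, (conj_elemG g w).symm⟩

lemma mem_sup_normal {G' : Type*} [Group G'] {N X : Subgroup G'} [N.Normal] {g : G'} :
    g ∈ N ⊔ X ↔ ∃ n ∈ N, ∃ x ∈ X, n * x = g := by
  rw [← SetLike.mem_coe, Subgroup.normal_mul]
  simp [Set.mem_mul]

lemma subG_mono {W W' : AddSubgroup (Fin t → V)} (h : W ≤ W') :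
    subG (H := H) W ≤ subG (H := H) W' :=
  Subgroup.map_mono (fun _ hx => h hx)

end Aux

/-- Let `G = V^t ⋊ H` with `V` a faithful irreducible `H`-module, and let
`K = W₁X` and `M = W₂H^{v₂}`, where `W₁` is a proper `H`-submodule of `V^t`,
`W₂` is a maximal `H`-submodule of `V^t`, `X ≤ H^{v₁}`, and `v₁, v₂ ∈ V^t`.
If `W₁ + W₂ = V^t`, then there exists `w₁ ∈ W₁` such that
`K ∩ M = (W₁ ∩ W₂)·X^{w₁}`. -/
theorem inter_eq_of_sup_eq_top
    (p : ℕ) (hp : p.Prime) (V H : Type*) [AddCommGroup V] [Group H]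
    [DistribMulAction H V] [Finite V] [Finite H] [Group.IsSolvable H]
    (helem : ∀ v : V, p • v = 0)
    (hfaith : IsFaithful H V) (hirr : IsIrreducible H V)
    (t : ℕ) (W₁ W₂ : AddSubgroup (Fin t → V)) (v₁ v₂ : Fin t → V)
    (X : Subgroup (SDP V H t))
    (hW₁ : IsHSub H W₁) (hW₁top : W₁ ≠ ⊤) (hW₂ : IsMaxHSub H W₂)
    (hX : X ≤ HG V H t v₁)
    (hsup : W₁ ⊔ W₂ = ⊤) :
    ∃ w₁ ∈ W₁,
      (subG W₁ ⊔ X) ⊓ (subG W₂ ⊔ HG V H t v₂) = subG (W₁ ⊓ W₂) ⊔ conjG X w₁ := by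
    classical
  have hmem : v₂ - v₁ ∈ W₁ ⊔ W₂ := by rw [hsup]; trivial
  rw [AddSubgroup.mem_sup] at hmem
  obtain ⟨w₁, hw₁, w₂, hw₂, hsum⟩ := hmem
  refine ⟨w₁, hw₁, ?_⟩
  have hW₂inv := hW₂.1
  have hd : v₁ + w₁ - v₂ ∈ W₂ := by
    have he : v₁ + w₁ - v₂ = -w₂ := by
      have h2 : w₂ = v₂ - v₁ - w₁ := by rw [← hsum]; abel
      rw [h2]; abel
    rw [he]; exact neg_mem hw₂
  haveI hN1 : (subG (H := H) W₁).Normal := subG_normal hW₁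
  haveI hN2 : (subG (H := H) W₂).Normal := subG_normal hW₂inv
  haveI hN12 : (subG (H := H) (W₁ ⊓ W₂)).Normal :=
    subG_normal (fun h w hw => ⟨hW₁ h w hw.1, hW₂inv h w hw.2⟩)
  -- X^{w₁} ≤ M
  have hXM : conjG X w₁ ≤ subG W₂ ⊔ HG V H t v₂ := by
    intro x hx
    obtain ⟨y, hy, rfl⟩ := mem_conjG.mp hx
    obtain ⟨h, rfl⟩ := mem_HG.mp (hX hy)
    set d : Fin t → V := v₁ + w₁ - v₂ with hdd
    have key : (elemG w₁)⁻¹ * ((elemG v₁)⁻¹ * SemidirectProduct.inr h * elemG v₁) * elemG w₁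
        = elemG (-d + h • d) * ((elemG v₂)⁻¹ * SemidirectProduct.inr h * elemG v₂) := by
      rw [elemG_inv', elemG_inv', elemG_inv']
      calc elemG (-w₁) * (elemG (-v₁) * SemidirectProduct.inr h * elemG v₁) * elemG w₁
          = (elemG (-w₁) * elemG (-v₁)) * SemidirectProduct.inr h * (elemG v₁ * elemG w₁) := by
            group
        _ = elemG (-w₁ + -v₁) * SemidirectProduct.inr h * elemG (v₁ + w₁) := by
            rw [elemG_mul', elemG_mul']
        _ = elemG (-w₁ + -v₁ + h • (v₁ + w₁)) * SemidirectProduct.inr h := by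
            rw [elemG_inr_elemG]
        _ = elemG ((-d + h • d) + (-v₂ + h • v₂)) * SemidirectProduct.inr h := by
            congr 1
            apply congrArg
            simp only [hdd, smul_sub, smul_add]
            abel
        _ = elemG (-d + h • d) * (elemG (-v₂) * SemidirectProduct.inr h * elemG v₂) := by
            rw [elemG_inr_elemG, ← elemG_mul', mul_assoc]
    rw [key]
    refine mul_mem (Subgroup.mem_sup_left (mem_subG.mpr ⟨-d + h • d, ?_, rfl⟩))
      (Subgroup.mem_sup_right (mem_HG.mpr ⟨h, rfl⟩))
    exact add_mem (neg_mem hd) (hW₂inv h d hd)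
  -- X^{w₁} ≤ K
  have hXK : conjG X w₁ ≤ subG W₁ ⊔ X := by
    intro x hx
    obtain ⟨y, hy, rfl⟩ := mem_conjG.mp hx
    have h1 : elemG (H := H) w₁ ∈ subG W₁ ⊔ X :=
      Subgroup.mem_sup_left (mem_subG.mpr ⟨w₁, hw₁, rfl⟩)
    exact mul_mem (mul_mem (inv_mem h1) (Subgroup.mem_sup_right hy)) h1
  apply le_antisymm
  · rintro g ⟨hgK, hgM⟩
    obtain ⟨n, hn, x, hx, rfl⟩ := mem_sup_normal.mp hgK
    obtain ⟨a, ha, rfl⟩ := mem_subG.mp hn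
    set y : SDP V H t := (elemG w₁)⁻¹ * x * elemG w₁ with hy
    have hyX : y ∈ conjG X w₁ := mem_conjG.mpr ⟨x, hx, rfl⟩
    set c : Fin t → V := a + w₁ + y.right • (-w₁) with hc
    have hkey : elemG (H := H) a * x = elemG c * y := by
      have hxy : x = elemG w₁ * y * (elemG w₁)⁻¹ := by rw [hy]; group
      have h2 : y * (elemG w₁)⁻¹ = elemG (y.right • (-w₁)) * y := by
        rw [elemG_inv', ← conj_elemG y (-w₁)]; group
      calc elemG (H := H) a * x
          = elemG a * elemG w₁ * (y * (elemG w₁)⁻¹) := by rw [hxy]; group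
        _ = elemG a * elemG w₁ * (elemG (y.right • (-w₁)) * y) := by rw [h2]
        _ = elemG c * y := by
            rw [hc, ← elemG_mul', ← elemG_mul']; group
    have hcW₁ : c ∈ W₁ := add_mem (add_mem ha hw₁) (hW₁ _ _ (neg_mem hw₁))
    have hcM : elemG (H := H) c ∈ subG W₂ ⊔ HG V H t v₂ := by
      have h3 : elemG (H := H) c = (elemG a * x) * y⁻¹ := by rw [hkey]; group
      rw [h3]
      exact mul_mem hgM (inv_mem (hXM hyX))
    obtain ⟨n', hn', m, hm, hbm⟩ := mem_sup_normal.mp hcM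
    obtain ⟨b, hb, rfl⟩ := mem_subG.mp hn'
    obtain ⟨h₂, rfl⟩ := mem_HG.mp hm
    have hr : h₂ = 1 := by
      have h4 := congrArg SemidirectProduct.right hbm
      simpa [elemG, SemidirectProduct.mul_right, SemidirectProduct.inv_right] using h4
    have hbc : b = c := by
      apply elemG_injective (V := V) (H := H)
      rw [← hbm, hr]
      simp
    have hcW₂ : c ∈ W₂ := hbc ▸ hb
    rw [hkey]
    exact mul_mem (Subgroup.mem_sup_left (mem_subG.mpr ⟨c, ⟨hcW₁, hcW₂⟩, rfl⟩))
      (Subgroup.mem_sup_right hyX)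
  · refine sup_le (le_inf ?_ ?_) (le_inf hXK hXM)
    · exact le_trans (subG_mono inf_le_left) le_sup_left
    · exact le_trans (subG_mono inf_le_right) le_sup_left
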